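/- If u ≤ v in the Bruhat order of a finite Coxeter group W with longest element w_0, R is a reduced word for v, and S is a reduced word for u^{-1}w_0, then the Demazure product of the concatenation Q = R + S equals w_0. -/

import Mathlib

open List

variable {B : Type*} [DecidableEq B] {W : Type*} [Group W] {M : CoxeterMatrix B}

/-- One step of the Demazure product recursion: multiply by the simple reflection `s i`
if this increases length, otherwise do nothing. -/
noncomputable def demStep (cs : CoxeterSystem M W) (w : W) (i : B) : W :=
  if cs.length w < cs.length (w * cs.simple i) then w * cs.simple i else w

/-- The Demazure product of a word `Q` in the simple reflections. -/
noncomputable def dem (cs : CoxeterSystem M W) (Q : List B) : W :=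
  Q.foldl (demStep cs) 1

/-- `l` is a reduced word for `w`. -/
def IsRWordFor (cs : CoxeterSystem M W) (l : List B) (w : W) : Prop :=
  cs.wordProd l = w ∧ l.length = cs.length w

/-- Bruhat order via the subword property: `u ≤ v` iff some reduced word for `v`
contains a sublist which is a reduced word for `u`. -/
def BruhatLE (cs : CoxeterSystem M W) (u v : W) : Prop :=
  ∃ l : List B, IsRWordFor cs l v ∧ ∃ l' : List B, l'.Sublist l ∧ IsRWordFor cs l' u

/-- The word obtained from `Q` by deleting the letters at positions in `F`
(the ordered complement `Q∖F`). -/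
def cword (Q : List B) (F : Finset (Fin Q.length)) : List B :=
  ((List.finRange Q.length).filter (fun i => i ∉ F)).map Q.get

/-- `F` is a facet of the subword complex `Δ(Q,w)`: the ordered product of the letters of
`Q` at positions outside `F` is a reduced expression for `w`. -/
def IsFacet (cs : CoxeterSystem M W) (Q : List B) (w : W) (F : Finset (Fin Q.length)) : Prop :=
  IsRWordFor cs (cword Q F) w

/-- `J` is a face of the subword complex `Δ(Q,w)`: the complement `Q∖J` contains a reduced
expression for `w` as a subword. -/
def IsFace (cs : CoxeterSystem M W) (Q : List B) (w : W) (J : Finset (Fin Q.length)) : Prop :=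
  ∃ l : List B, l.Sublist (cword Q J) ∧ IsRWordFor cs l w

set_option linter.unusedSectionVars false

namespace DemAux

open CoxeterSystem

noncomputable local instance : DecidableEq W := Classical.decEq W

variable (cs : CoxeterSystem M W)

/-- Sum of indicators (mod 2) of occurrences of `t` in `L`. -/
noncomputable def nu (t : W) (L : List W) : ZMod 2 :=
  (L.map (fun u => if u = t then (1 : ZMod 2) else 0)).sum

lemma zmod2_add_self : ∀ x : ZMod 2, x + x = 0 := by decide

lemma nu_nil (t : W) : nu t [] = 0 := rfl

lemma nu_cons (t u : W) (L : List W) :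
    nu t (u :: L) = (if u = t then (1 : ZMod 2) else 0) + nu t L := by
  simp [nu]

lemma nu_append (t : W) (L L' : List W) : nu t (L ++ L') = nu t L + nu t L' := by
  simp [nu]

lemma nu_map_inj {f : W → W} (hf : Function.Injective f) (t : W) (L : List W) :
    nu (f t) (L.map f) = nu t L := by
  unfold nu
  rw [List.map_map]
  congr 1
  apply List.map_congr_left
  intro u _
  simp [hf.eq_iff]

lemma nu_eq_zero_of_not_mem {t : W} {L : List W} (h : t ∉ L) : nu t L = 0 := by
  unfold nu
  apply List.sum_eq_zero
  intro x hx
  obtain ⟨u, hu, rfl⟩ := List.mem_map.mp hx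
  rw [if_neg]
  intro h'; exact absurd (h' ▸ hu) h

lemma mem_of_nu_ne_zero {t : W} {L : List W} (h : nu t L ≠ 0) : t ∈ L := by
  by_contra hm; exact h (nu_eq_zero_of_not_mem hm)

/-- conjugation of powers by an involution inverting `q`. -/
lemma conj_pow {G : Type*} [Group G] {a q : G} (ha2 : a * a = 1) (ha : a * q * a = q⁻¹) :
    ∀ k : ℕ, a * q ^ k * a = (q ^ k)⁻¹ := by
  intro k
  induction k with
  | zero => simpa using ha2
  | succ k ih =>
    have h : a * q ^ (k + 1) * a = (a * q ^ k * a) * (a * q * a) := by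
      rw [pow_succ]
      simp only [mul_assoc]
      congr 2
      rw [← mul_assoc a a, ha2, one_mul]
    rw [h, ih, ha, pow_succ', mul_inv_rev]

lemma conj_eq_iff {G : Type*} [Group G] (g t c : G) :
    g * t * g⁻¹ = c ↔ t = g⁻¹ * c * g := by
  constructor
  · intro h; rw [← h]; group
  · intro h; rw [h]; group


/-- The sign-action generator on `W × ZMod 2`. -/
noncomputable def pmF (i : B) : W × ZMod 2 → W × ZMod 2 :=
  fun p => (cs.simple i * p.1 * cs.simple i, p.2 + if p.1 = cs.simple i then 1 else 0)

lemma pmF_involutive (i : B) : Function.Involutive (pmF cs i) := by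
  intro p
  obtain ⟨t, z⟩ := p
  unfold pmF
  have hs : cs.simple i * cs.simple i = 1 := cs.simple_mul_simple_self i
  simp only
  rw [Prod.mk.injEq]
  have hiff : (cs.simple i * t * cs.simple i = cs.simple i) ↔ (t = cs.simple i) := by
    constructor
    · intro h
      have ht : t = (cs.simple i)⁻¹ * (cs.simple i * t * cs.simple i) * (cs.simple i)⁻¹ := by
        group
      rw [h, cs.inv_simple] at ht
      rw [ht, hs, one_mul]
    · intro h; rw [h, hs, one_mul]
  constructor
  · rw [← mul_assoc, ← mul_assoc, hs, one_mul, mul_assoc, hs, mul_one]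
  · by_cases h : t = cs.simple i
    · rw [if_pos h, if_pos (hiff.mpr h), add_assoc, zmod2_add_self, add_zero]
    · rw [if_neg h, if_neg (fun hc => h (hiff.mp hc)), add_zero, add_zero]

/-- The sign-action generator as a permutation. -/
noncomputable def pmE (i : B) : Equiv.Perm (W × ZMod 2) :=
  Function.Involutive.toPerm (pmF cs i) (pmF_involutive cs i)

lemma pmE_apply (i : B) (p : W × ZMod 2) : pmE cs i p = pmF cs i p := rfl

lemma pmE_pow_apply (i j : B) (m : ℕ) (t : W) (z : ZMod 2) :
    ((pmE cs i * pmE cs j) ^ m) (t, z) =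
      ((cs.simple i * cs.simple j) ^ m * t * ((cs.simple i * cs.simple j) ^ m)⁻¹,
       z + ((List.range (2 * m)).map (fun n =>
          if t = cs.simple i * (cs.simple i * cs.simple j) ^ (n + 1) then (1 : ZMod 2) else 0)).sum) := by
  set q : W := cs.simple i * cs.simple j with hqdef
  have hi : cs.simple i * cs.simple i = 1 := cs.simple_mul_simple_self i
  have hj : cs.simple j * cs.simple j = 1 := cs.simple_mul_simple_self j
  have hq1 : q⁻¹ = cs.simple j * cs.simple i := by
    rw [hqdef, mul_inv_rev, cs.inv_simple, cs.inv_simple]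
  have hqi : cs.simple i * q * cs.simple i = q⁻¹ := by
    rw [hqdef, cs.simple_mul_simple_cancel_left, hq1]
  have hqj : cs.simple j * q * cs.simple j = q⁻¹ := by
    rw [hqdef, mul_assoc, cs.simple_mul_simple_cancel_right, hq1]
  have hci : ∀ k : ℕ, cs.simple i * q ^ k * cs.simple i = (q ^ k)⁻¹ := conj_pow hi hqi
  have hcj : ∀ k : ℕ, cs.simple j * q ^ k * cs.simple j = (q ^ k)⁻¹ := conj_pow hj hqj
  have hio : ∀ k : ℕ, (q ^ k)⁻¹ * cs.simple i = cs.simple i * q ^ k := by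
    intro k
    rw [← hci k, mul_assoc, mul_assoc, hi, mul_one]
  have hjo : ∀ k : ℕ, (q ^ k)⁻¹ * cs.simple j = cs.simple j * q ^ k := by
    intro k
    rw [← hcj k, mul_assoc, mul_assoc, hj, mul_one]
  have hsj : cs.simple j = cs.simple i * q := by
    rw [hqdef, cs.simple_mul_simple_cancel_left]
  -- key closed forms
  have e1 : ∀ m : ℕ, (q ^ m)⁻¹ * cs.simple j * q ^ m = cs.simple i * q ^ (2 * m + 1) := by
    intro m
    rw [hjo m]
    nth_rewrite 1 [hsj]
    rw [mul_assoc, mul_assoc, ← pow_add, ← pow_succ']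
    congr 2
    omega
  have e2 : ∀ m : ℕ, (q ^ m)⁻¹ * (cs.simple j * cs.simple i * cs.simple j) * q ^ m
      = cs.simple i * q ^ (2 * m + 1 + 1) := by
    intro m
    calc (q ^ m)⁻¹ * (cs.simple j * cs.simple i * cs.simple j) * q ^ m
        = (q ^ (m + 1))⁻¹ * cs.simple j * q ^ m := by
          rw [pow_succ, mul_inv_rev, ← hq1]; group
      _ = cs.simple j * q ^ (m + 1) * q ^ m := by rw [hjo (m + 1)]
      _ = cs.simple i * (q * (q ^ (m + 1) * q ^ m)) := by
          nth_rewrite 1 [hsj]; group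
      _ = cs.simple i * q ^ (2 * m + 1 + 1) := by
          rw [← pow_add, ← pow_succ']
          congr 2
          omega
  induction m with
  | zero => simp
  | succ m ih =>
    rw [pow_succ']
    rw [Equiv.Perm.mul_apply, ih]
    rw [Equiv.Perm.mul_apply, pmE_apply, pmE_apply]
    unfold pmF
    simp only
    rw [Prod.mk.injEq]
    have c1 : (q ^ m * t * (q ^ m)⁻¹ = cs.simple j) ↔ (t = cs.simple i * q ^ (2 * m + 1)) := by
      rw [conj_eq_iff, e1 m]
    have c2 : (cs.simple j * (q ^ m * t * (q ^ m)⁻¹) * cs.simple j = cs.simple i)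
        ↔ (t = cs.simple i * q ^ (2 * m + 1 + 1)) := by
      have hkey : ∀ u : W, cs.simple j * (q ^ m * ((q ^ m)⁻¹ * u * q ^ m) * (q ^ m)⁻¹) * cs.simple j
          = cs.simple j * u * cs.simple j := by
        intro u; group
      constructor
      · intro h
        have h' : q ^ m * t * (q ^ m)⁻¹ = cs.simple j * cs.simple i * cs.simple j := by
          have hx : q ^ m * t * (q ^ m)⁻¹
              = (cs.simple j)⁻¹ * (cs.simple j * (q ^ m * t * (q ^ m)⁻¹) * cs.simple j)
                * (cs.simple j)⁻¹ := by group
          rw [h, cs.inv_simple] at hx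
          exact hx
        rw [conj_eq_iff] at h'
        rw [h', e2 m]
      · intro h
        rw [h, ← e2 m, hkey]
        calc cs.simple j * (cs.simple j * cs.simple i * cs.simple j) * cs.simple j
            = cs.simple j * (cs.simple j * (cs.simple i * cs.simple j)) * cs.simple j := by
              rw [mul_assoc (cs.simple j) (cs.simple i) (cs.simple j)]
          _ = cs.simple i * cs.simple j * cs.simple j := by
              rw [cs.simple_mul_simple_cancel_left]
          _ = cs.simple i := cs.simple_mul_simple_cancel_right j
    constructor
    · -- first coordinate
      rw [pow_succ' q m, mul_inv_rev, hq1]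
      nth_rewrite 3 [hqdef]
      group
    · -- second coordinate
      rw [if_congr c1 rfl rfl, if_congr c2 rfl rfl]
      have hr : 2 * (m + 1) = 2 * m + 1 + 1 := by ring
      rw [hr, List.range_succ, List.range_succ]
      simp only [List.map_append, List.sum_append, List.map_cons, List.map_nil, List.sum_cons,
        List.sum_nil, add_zero]
      simp only [add_assoc]


lemma pmE_liftable : M.IsLiftable (pmE cs) := by
  intro i j
  apply Equiv.ext
  rintro ⟨t, z⟩
  rw [pmE_pow_apply]
  have hq : (cs.simple i * cs.simple j) ^ M i j = 1 := cs.simple_mul_simple_pow i j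
  rw [Equiv.Perm.one_apply, Prod.mk.injEq]
  constructor
  · rw [hq]; group
  · have hsum : ((List.range (2 * M i j)).map (fun n =>
        if t = cs.simple i * (cs.simple i * cs.simple j) ^ (n + 1) then (1 : ZMod 2) else 0)).sum
        = 0 := by
      have h2 : 2 * M i j = M i j + M i j := by ring
      rw [h2, List.range_add, List.map_append, List.sum_append, List.map_map]
      have : ((List.range (M i j)).map
          ((fun n => if t = cs.simple i * (cs.simple i * cs.simple j) ^ (n + 1)
              then (1 : ZMod 2) else 0) ∘ (fun x => M i j + x)))
          = ((List.range (M i j)).map (fun n =>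
            if t = cs.simple i * (cs.simple i * cs.simple j) ^ (n + 1)
              then (1 : ZMod 2) else 0)) := by
        apply List.map_congr_left
        intro n _
        simp only [Function.comp_apply]
        congr 2
        rw [show M i j + n + 1 = M i j + (n + 1) by omega, pow_add, hq, one_mul]
      rw [this, zmod2_add_self]
    rw [hsum, add_zero]

/-- The sign homomorphism `W →* Perm (W × ZMod 2)`. -/
noncomputable def phi : W →* Equiv.Perm (W × ZMod 2) :=
  cs.lift ⟨pmE cs, pmE_liftable cs⟩

lemma rightInvSeq_cons (i : B) (l : List B) :
    cs.rightInvSeq (i :: l)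
      = ((cs.wordProd l)⁻¹ * cs.simple i * cs.wordProd l) :: cs.rightInvSeq l := rfl

lemma phi_wordProd (l : List B) (t : W) (z : ZMod 2) :
    phi cs (cs.wordProd l) (t, z)
      = (cs.wordProd l * t * (cs.wordProd l)⁻¹, z + nu t (cs.rightInvSeq l)) := by
  induction l generalizing z with
  | nil =>
    simp [nu_nil, CoxeterSystem.wordProd_nil]
  | cons i l ih =>
    rw [cs.wordProd_cons, map_mul, Equiv.Perm.mul_apply, ih]
    have hphi : phi cs (cs.simple i) = pmE cs i := cs.lift_apply_simple (pmE_liftable cs) i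
    rw [hphi, pmE_apply]
    unfold pmF
    simp only
    rw [Prod.mk.injEq]
    constructor
    · rw [mul_inv_rev, cs.inv_simple]
      group
    · rw [rightInvSeq_cons, nu_cons]
      have hcond : (cs.wordProd l * t * (cs.wordProd l)⁻¹ = cs.simple i)
          ↔ ((cs.wordProd l)⁻¹ * cs.simple i * cs.wordProd l = t) := by
        rw [conj_eq_iff, eq_comm]
      rw [if_congr hcond rfl rfl]
      ring_nf

lemma nu_ris_eq {l r : List B} (h : cs.wordProd l = cs.wordProd r) (t : W) :
    nu t (cs.rightInvSeq l) = nu t (cs.rightInvSeq r) := by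
  have h1 := phi_wordProd cs l t 0
  have h2 := phi_wordProd cs r t 0
  rw [h] at h1
  rw [h1] at h2
  have := congrArg Prod.snd h2
  simpa using this

lemma rightInvSeq_append (A C : List B) :
    cs.rightInvSeq (A ++ C)
      = (cs.rightInvSeq A).map (fun u => (cs.wordProd C)⁻¹ * u * cs.wordProd C)
          ++ cs.rightInvSeq C := by
  induction A with
  | nil => simp
  | cons a A ih =>
    rw [List.cons_append, rightInvSeq_cons, rightInvSeq_cons, ih, List.map_cons,
      List.cons_append]
    congr 1
    rw [cs.wordProd_append, mul_inv_rev]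
    group

lemma conj_injective {G : Type*} [Group G] (g h : G) :
    Function.Injective (fun u => g * u * h) := by
  intro a b hab
  simp only at hab
  have := congrArg (fun x => g⁻¹ * x * h⁻¹) hab
  simpa [mul_assoc] using this

lemma nu_map_inj' {f : W → W} (hf : Function.Injective f) {t t0 : W} (h : f t0 = t)
    (L : List W) : nu t (L.map f) = nu t0 L := by
  subst h
  exact nu_map_inj hf t0 L

lemma nu_palindrome (i : B) : ∀ x : List B,
    nu (cs.wordProd x * cs.simple i * (cs.wordProd x)⁻¹)
      (cs.rightInvSeq (x ++ i :: x.reverse)) = 1 := by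
  intro x
  induction x with
  | nil =>
    simp [rightInvSeq_cons, nu_cons, nu_nil]
  | cons b x ih =>
    have hss : ∀ k : B, cs.simple k * cs.simple k = 1 := fun k => cs.simple_mul_simple_self k
    set t' : W := cs.wordProd x * cs.simple i * (cs.wordProd x)⁻¹ with ht'def
    have ht'inv : t' * t' = 1 := by
      rw [ht'def]
      calc (cs.wordProd x * cs.simple i * (cs.wordProd x)⁻¹)
            * (cs.wordProd x * cs.simple i * (cs.wordProd x)⁻¹)
          = cs.wordProd x * (cs.simple i * cs.simple i) * (cs.wordProd x)⁻¹ := by group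
        _ = 1 := by rw [hss i, mul_one]; group
    have ht'i : t'⁻¹ = t' := by rw [inv_eq_iff_mul_eq_one]; exact ht'inv
    set z : List B := x ++ i :: x.reverse with hzdef
    have hπz : cs.wordProd z = t' := by
      rw [hzdef, ht'def, cs.wordProd_append, cs.wordProd_cons]
      rw [CoxeterSystem.wordProd_reverse, ← mul_assoc]
    have hw : (b :: x) ++ i :: (b :: x).reverse = b :: (z ++ [b]) := by
      simp [hzdef]
    have hT : cs.wordProd (b :: x) * cs.simple i * (cs.wordProd (b :: x))⁻¹
        = cs.simple b * t' * cs.simple b := by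
      rw [ht'def, cs.wordProd_cons, mul_inv_rev, cs.inv_simple]
      group
    rw [hw, hT, rightInvSeq_cons, rightInvSeq_append]
    set T : W := cs.simple b * t' * cs.simple b with hTdef
    rw [nu_cons, nu_append]
    have hfun : (fun u => (cs.wordProd [b])⁻¹ * u * cs.wordProd [b])
        = (fun u : W => cs.simple b * u * cs.simple b) := by
      funext u
      rw [cs.wordProd_singleton, cs.inv_simple]
    have hft' : cs.simple b * t' * cs.simple b = T := by rw [hTdef]
    have hmap : nu T ((cs.rightInvSeq z).map
        (fun u => (cs.wordProd [b])⁻¹ * u * cs.wordProd [b])) = 1 := by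
      rw [hfun, nu_map_inj' (conj_injective (cs.simple b) (cs.simple b)) hft']
      exact ih
    rw [hmap, cs.rightInvSeq_singleton, nu_cons, nu_nil]
    have hπzb : cs.wordProd (z ++ [b]) = t' * cs.simple b := by
      rw [cs.wordProd_append, hπz, cs.wordProd_singleton]
    rw [hπzb]
    by_cases hc : t' = cs.simple b
    · have h1 : (t' * cs.simple b)⁻¹ * cs.simple b * (t' * cs.simple b) = T := by
        rw [hTdef, hc, hss b, inv_one, one_mul, mul_one]
      have h2 : cs.simple b = T := by
        rw [hTdef, hc, hss b, one_mul]
      rw [if_pos h1, if_pos h2]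
      decide
    · have h2 : ¬(cs.simple b = T) := by
        intro h
        apply hc
        have h5 : t' = (cs.simple b)⁻¹ * (cs.simple b * t' * cs.simple b) * (cs.simple b)⁻¹ := by
          group
        rw [hft', ← h, cs.inv_simple, hss b, one_mul] at h5
        exact h5
      have h1 : ¬((t' * cs.simple b)⁻¹ * cs.simple b * (t' * cs.simple b) = T) := by
        intro h
        apply hc
        rw [hTdef, mul_inv_rev, cs.inv_simple, ht'i] at h
        have h4 : t' * cs.simple b = 1 :=
          mul_left_cancel (a := cs.simple b * t' * cs.simple b) (by rw [mul_one]; exact h)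
        have h5 : t' = (cs.simple b)⁻¹ := eq_inv_of_mul_eq_one_left h4
        rw [cs.inv_simple] at h5
        exact h5
      rw [if_neg h1, if_neg h2]
      decide


lemma nu_flip {w t : W} (ht : cs.IsReflection t) {l r : List B}
    (hl : cs.wordProd l = w) (hr : cs.wordProd r = w * t) :
    nu t (cs.rightInvSeq l) = nu t (cs.rightInvSeq r) + 1 := by
  have htt : t * t = 1 := ht.mul_self
  have hti : t⁻¹ = t := ht.inv
  obtain ⟨g, i, hgi⟩ := ht
  obtain ⟨x, hx⟩ := cs.wordProd_surjective g
  have hc : cs.wordProd (x ++ i :: x.reverse) = t := by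
    rw [cs.wordProd_append, cs.wordProd_cons, CoxeterSystem.wordProd_reverse, hx, hgi, mul_assoc]
  have hprod : cs.wordProd l = cs.wordProd (r ++ (x ++ i :: x.reverse)) := by
    rw [cs.wordProd_append, hc, hr, hl, mul_assoc, htt, mul_one]
  rw [nu_ris_eq cs hprod t, rightInvSeq_append, nu_append]
  have h1 : nu t ((cs.rightInvSeq r).map
      (fun u => (cs.wordProd (x ++ i :: x.reverse))⁻¹ * u * cs.wordProd (x ++ i :: x.reverse)))
      = nu t (cs.rightInvSeq r) := by
    apply nu_map_inj' (conj_injective _ _)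
    rw [hc, hti, htt, one_mul]
  have h2 : nu t (cs.rightInvSeq (x ++ i :: x.reverse)) = 1 := by
    have h3 := nu_palindrome cs i x
    rw [hx, ← hgi] at h3
    exact h3
  rw [h1, h2]

lemma mem_rightInvSeq_of_isRightInversion {w t : W} (ht : cs.IsReflection t)
    (hlt : cs.length (w * t) < cs.length w) {l : List B} (hred : cs.IsReduced l)
    (hl : cs.wordProd l = w) : t ∈ cs.rightInvSeq l := by
  by_contra hmem
  have h0 : nu t (cs.rightInvSeq l) = 0 := nu_eq_zero_of_not_mem hmem
  obtain ⟨r, hrred, hrw⟩ := cs.exists_reduced_word' (w * t)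
  have hflip := nu_flip cs ht hl hrw.symm
  rw [h0] at hflip
  have h1 : nu t (cs.rightInvSeq r) = 1 := by
    have key : ∀ a : ZMod 2, (0 : ZMod 2) = a + 1 → a = 1 := by decide
    exact key _ hflip
  have hmem' : t ∈ cs.rightInvSeq r := mem_of_nu_ne_zero (by rw [h1]; exact one_ne_zero)
  have hinv := cs.isRightInversion_of_mem_rightInvSeq hrred hmem'
  have h2 := hinv.2
  rw [← hrw, mul_assoc, ht.mul_self, mul_one] at h2
  omega

lemma exists_eraseIdx_of_isRightInversion {w t : W} (ht : cs.IsReflection t)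
    (hlt : cs.length (w * t) < cs.length w) {l : List B} (hred : cs.IsReduced l)
    (hl : cs.wordProd l = w) :
    ∃ j, j < l.length ∧ cs.wordProd (l.eraseIdx j) = w * t := by
  have hm := mem_rightInvSeq_of_isRightInversion cs ht hlt hred hl
  obtain ⟨j, hj, hget⟩ := List.mem_iff_getElem.mp hm
  have hjl : j < l.length := by
    have := cs.length_rightInvSeq l
    omega
  refine ⟨j, hjl, ?_⟩
  rw [← cs.wordProd_mul_getD_rightInvSeq l j, hl, List.getD_eq_getElem _ 1 hj, hget]

lemma exists_reduced_sublist : ∀ (n : ℕ) (z : List B), z.length ≤ n →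
    ∃ z', z'.Sublist z ∧ cs.IsReduced z' ∧ cs.wordProd z' = cs.wordProd z := by
  intro n
  induction n using Nat.strong_induction_on with
  | _ n ihn =>
  intro z hzn
  by_cases hz : cs.IsReduced z
  · exact ⟨z, List.Sublist.refl z, hz, rfl⟩
  have hex : ∃ k, ¬cs.IsReduced (z.take k) := ⟨z.length, by rwa [List.take_length]⟩
  classical
  have hKspec : ¬cs.IsReduced (z.take (Nat.find hex)) := Nat.find_spec hex
  have hK0 : Nat.find hex ≠ 0 := by
    intro h
    apply hKspec
    rw [h, List.take_zero]
    unfold CoxeterSystem.IsReduced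
    simp
  obtain ⟨k, hkK⟩ : ∃ k, Nat.find hex = k + 1 := ⟨Nat.find hex - 1, by omega⟩
  rw [hkK] at hKspec
  have hkred : cs.IsReduced (z.take k) := by
    by_contra h
    exact Nat.find_min hex (m := k) (by omega) h
  have hKle : Nat.find hex ≤ z.length := Nat.find_le (by rwa [List.take_length])
  have hk_lt : k < z.length := by omega
  have htake : z.take (k+1) = z.take k ++ [z[k]'hk_lt] := by
    rw [List.take_succ, List.getElem?_eq_getElem hk_lt]
    simp
  have hlen_take : (z.take k).length = k := by rw [List.length_take]; omega
  have hℓk : cs.length (cs.wordProd (z.take k)) = k := by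
    have h := hkred
    unfold CoxeterSystem.IsReduced at h
    rw [h, hlen_take]
  have hπsucc : cs.wordProd (z.take (k+1))
      = cs.wordProd (z.take k) * cs.simple (z[k]'hk_lt) := by
    rw [htake, cs.wordProd_append, cs.wordProd_singleton]
  have hdown : cs.length (cs.wordProd (z.take k) * cs.simple (z[k]'hk_lt))
      < cs.length (cs.wordProd (z.take k)) := by
    rcases cs.length_mul_simple (cs.wordProd (z.take k)) (z[k]'hk_lt) with hup | hdn
    · exfalso
      apply hKspec
      unfold CoxeterSystem.IsReduced
      rw [hπsucc, hup, hℓk, List.length_take]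
      omega
    · omega
  obtain ⟨j, hj, hjπ⟩ := exists_eraseIdx_of_isRightInversion cs
    (cs.isReflection_simple (z[k]'hk_lt)) hdown hkred rfl
  have hπz' : cs.wordProd ((z.take k).eraseIdx j ++ z.drop (k+1)) = cs.wordProd z := by
    rw [cs.wordProd_append, hjπ, ← hπsucc, ← cs.wordProd_append, List.take_append_drop]
  have hsub : ((z.take k).eraseIdx j ++ z.drop (k+1)).Sublist z := by
    have h1 : ((z.take k).eraseIdx j).Sublist (z.take (k+1)) := by
      apply List.Sublist.trans (List.eraseIdx_sublist _ j)
      have h2 : z.take k = (z.take (k+1)).take k := by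
        rw [List.take_take]
        congr 1
        omega
      rw [h2]
      exact List.take_sublist _ _
    have h3 := List.Sublist.append h1 (List.Sublist.refl (z.drop (k+1)))
    rwa [List.take_append_drop] at h3
  have hlt : ((z.take k).eraseIdx j ++ z.drop (k+1)).length < z.length := by
    rw [List.length_append, List.length_eraseIdx, if_pos hj, List.length_drop, hlen_take]
    rw [hlen_take] at hj
    omega
  obtain ⟨z'', hsub'', hred'', hπ''⟩ :=
    ihn ((z.take k).eraseIdx j ++ z.drop (k+1)).length (by omega) _ le_rfl
  exact ⟨z'', hsub''.trans hsub, hred'', by rw [hπ'', hπz']⟩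

lemma subword_step {x t : W} (ht : cs.IsReflection t)
    (hlt : cs.length x < cs.length (x * t)) {l : List B} (hred : cs.IsReduced l)
    (hl : cs.wordProd l = x * t) :
    ∃ l', l'.Sublist l ∧ cs.IsReduced l' ∧ cs.wordProd l' = x := by
  have hxt : (x * t) * t = x := by rw [mul_assoc, ht.mul_self, mul_one]
  have hlt' : cs.length ((x * t) * t) < cs.length (x * t) := by rwa [hxt]
  obtain ⟨j, hj, hjπ⟩ := exists_eraseIdx_of_isRightInversion cs ht hlt' hred hl
  rw [hxt] at hjπ
  obtain ⟨l', hsub, hred', hπ'⟩ :=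
    exists_reduced_sublist cs (l.eraseIdx j).length (l.eraseIdx j) le_rfl
  exact ⟨l', hsub.trans (List.eraseIdx_sublist _ _), hred', by rw [hπ', hjπ]⟩


lemma sublist_concat_cases {l' k : List B} {c : B} (h : l'.Sublist (k ++ [c])) :
    l'.Sublist k ∨ ∃ k', l' = k' ++ [c] ∧ k'.Sublist k := by
  obtain ⟨u, w, rfl, hu, hw⟩ := List.sublist_append_iff.mp h
  rcases w with _ | ⟨d, w'⟩
  · left; simpa using hu
  · right
    cases hw with
    | cons _ h =>
      exfalso
      have h2 := List.sublist_nil.mp h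
      simp at h2
    | cons_cons _ h =>
      have hw' : w' = [] := List.sublist_nil.mp h
      subst hw'
      exact ⟨u, rfl, hu⟩

/-- One step of a Bruhat chain. -/
def brS : W → W → Prop := fun a b =>
  (∃ t : W, cs.IsReflection t ∧ b = a * t) ∧ cs.length a < cs.length b

/-- Bruhat chain order. -/
def br : W → W → Prop := Relation.ReflTransGen (brS cs)

lemma br_length_le {x y : W} (h : br cs x y) : cs.length x ≤ cs.length y := by
  induction h with
  | refl => exact le_rfl
  | tail _ h2 ih => exact le_of_lt (lt_of_le_of_lt ih h2.2)

lemma br_eq_of_length_ge {x y : W} (h : br cs x y) (hlen : cs.length y ≤ cs.length x) :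
    x = y := by
  rcases Relation.ReflTransGen.cases_tail h with heq | ⟨y', h1, h2⟩
  · exact heq.symm
  · exfalso
    have := br_length_le cs h1
    have := h2.2
    omega

lemma isReduced_of_append_left {k : List B} (c : B) (h : cs.IsReduced (k ++ [c])) :
    cs.IsReduced k := by
  have := h.take k.length
  rwa [List.take_left] at this

theorem liftABC : ∀ n : ℕ,
    (∀ (x y : W) (i : B), cs.length y ≤ n → br cs x y →
        cs.length y < cs.length (y * cs.simple i) →
        br cs (x * cs.simple i) (y * cs.simple i))
  ∧ (∀ (x y : W) (i : B), cs.length y ≤ n → br cs x y →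
        cs.length (y * cs.simple i) < cs.length y →
        br cs (x * cs.simple i) y)
  ∧ (∀ l l' : List B, l.length ≤ n → cs.IsReduced l → cs.IsReduced l' → l'.Sublist l →
        br cs (cs.wordProd l') (cs.wordProd l)) := by
  intro n
  induction n using Nat.strong_induction_on with
  | _ n ih =>
  refine ⟨?_, ?_, ?_⟩
  · -- statement A
    intro x y i hyn hxy hup
    rcases Relation.ReflTransGen.cases_tail hxy with heq | ⟨y', h1, h2⟩
    · rw [heq]
      exact Relation.ReflTransGen.refl
    · obtain ⟨⟨t, ht, rfl⟩, hlty⟩ := h2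
      have hy'n : cs.length y' < n := lt_of_lt_of_le hlty hyn
      obtain ⟨A', B', _⟩ := ih (cs.length y') hy'n
      rcases cs.length_mul_simple y' i with hup' | hdn'
      · have hA := A' x y' i le_rfl h1 (by omega)
        refine Relation.ReflTransGen.tail hA ⟨⟨cs.simple i * t * cs.simple i, ?_, ?_⟩, ?_⟩
        · have hconj := ht.conj (cs.simple i)
          rwa [cs.inv_simple] at hconj
        · have : (y' * cs.simple i) * (cs.simple i * t * cs.simple i)
              = y' * (cs.simple i * cs.simple i) * t * cs.simple i := by group
          rw [this, cs.simple_mul_simple_self, mul_one]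
        · omega
      · have hB := B' x y' i le_rfl h1 (by omega)
        exact (hB.tail ⟨⟨t, ht, rfl⟩, hlty⟩).tail
          ⟨⟨cs.simple i, cs.isReflection_simple i, rfl⟩, hup⟩
  · -- statement B
    intro x y i hyn hxy hdn
    rcases Relation.ReflTransGen.cases_tail hxy with heq | ⟨y', h1, h2⟩
    · subst heq
      refine Relation.ReflTransGen.single ⟨⟨cs.simple i, cs.isReflection_simple i, ?_⟩, hdn⟩
      rw [mul_assoc, cs.simple_mul_simple_self, mul_one]
    · obtain ⟨⟨t, ht, rfl⟩, hlty⟩ := h2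
      have hy'n : cs.length y' < n := lt_of_lt_of_le hlty hyn
      obtain ⟨A', B', _⟩ := ih (cs.length y') hy'n
      rcases cs.length_mul_simple y' i with hup' | hdn'
      · -- hard case : length goes up at y'
        have hA := A' x y' i le_rfl h1 (by omega)
        -- reduced word for y' * t ending in i
        obtain ⟨r, hrred, hrw⟩ := cs.exists_reduced_word' (y' * t * cs.simple i)
        have hrlen : r.length = cs.length (y' * t * cs.simple i) := by
          have h3 := hrred
          unfold CoxeterSystem.IsReduced at h3
          rw [← hrw] at h3
          omega
        have hπm1 : cs.wordProd (r ++ [i]) = y' * t := by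
          rw [cs.wordProd_append, cs.wordProd_singleton, ← hrw, mul_assoc,
            cs.simple_mul_simple_self, mul_one]
        have hdn2 : cs.length (y' * t * cs.simple i) + 1 = cs.length (y' * t) := by
          rcases cs.length_mul_simple (y' * t) i with h4 | h4
          · omega
          · omega
        have hm1red : cs.IsReduced (r ++ [i]) := by
          unfold CoxeterSystem.IsReduced
          rw [hπm1, List.length_append, List.length_singleton, hrlen]
          omega
        obtain ⟨l', hsub, hl'red, hl'π⟩ := subword_step cs ht hlty hm1red hπm1
        rcases sublist_concat_cases hsub with hcase | ⟨k', rfl, hk'⟩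
        · -- l' is a sublist of r
          have hlen2 : cs.length (y' * t * cs.simple i) < n := by omega
          obtain ⟨A'', _, C''⟩ := ih (cs.length (y' * t * cs.simple i)) hlen2
          have h5 : br cs (cs.wordProd l') (cs.wordProd r) :=
            C'' r l' (by omega) hrred hl'red hcase
          rw [hl'π, ← hrw] at h5
          have h6 := A'' y' (y' * t * cs.simple i) i le_rfl h5 (by
            rw [mul_assoc (y' * t) (cs.simple i) (cs.simple i), cs.simple_mul_simple_self,
              mul_one]
            omega)
          rw [mul_assoc (y' * t) (cs.simple i) (cs.simple i), cs.simple_mul_simple_self,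
            mul_one] at h6
          exact hA.trans h6
        · -- l' = k' ++ [i] : impossible
          exfalso
          have h7 : cs.wordProd k' * cs.simple i = y' := by
            rw [← cs.wordProd_singleton, ← cs.wordProd_append, hl'π]
          have h8 : y' * cs.simple i = cs.wordProd k' := by
            rw [← h7, mul_assoc, cs.simple_mul_simple_self, mul_one]
          have h9 : cs.length (cs.wordProd k') ≤ k'.length := cs.length_wordProd_le k'
          have h10 : (k' ++ [i]).length = cs.length y' := by
            have h11 := hl'red
            unfold CoxeterSystem.IsReduced at h11
            rw [hl'π] at h11
            omega
          rw [List.length_append, List.length_singleton] at h10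
          rw [← h8] at h9
          omega
      · have hB := B' x y' i le_rfl h1 (by omega)
        exact hB.tail ⟨⟨t, ht, rfl⟩, hlty⟩
  · -- statement C
    intro l l' hln hredl hredl' hsub
    rcases List.eq_nil_or_concat l with rfl | ⟨k, c, rfl⟩
    · rw [List.sublist_nil.mp hsub]
      exact Relation.ReflTransGen.refl
    · rw [List.concat_eq_append] at hredl hsub hln ⊢
      have hkred : cs.IsReduced k := isReduced_of_append_left cs c hredl
      have hπl : cs.wordProd (k ++ [c]) = cs.wordProd k * cs.simple c := by
        rw [cs.wordProd_append, cs.wordProd_singleton]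
      have hlk : cs.length (cs.wordProd k) = k.length := hkred
      have hll : cs.length (cs.wordProd (k ++ [c])) = k.length + 1 := by
        have h3 := hredl
        unfold CoxeterSystem.IsReduced at h3
        rw [h3, List.length_append, List.length_singleton]
      have hkn : k.length < n := by
        rw [List.length_append, List.length_singleton] at hln
        omega
      obtain ⟨A'', _, C''⟩ := ih k.length hkn
      rcases sublist_concat_cases hsub with hcase | ⟨k', rfl, hk'⟩
      · have h5 := C'' k l' le_rfl hkred hredl' hcase
        refine h5.tail ⟨⟨cs.simple c, cs.isReflection_simple c, hπl⟩, ?_⟩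
        rw [hlk, hll]
        omega
      · have hk'red : cs.IsReduced k' := isReduced_of_append_left cs c hredl'
        have h5 := C'' k k' le_rfl hkred hk'red hk'
        have h6 := A'' (cs.wordProd k') (cs.wordProd k) c (by rw [hlk]) h5 (by
          rw [← hπl, hlk, hll]
          omega)
        rw [hπl, cs.wordProd_append, cs.wordProd_singleton]
        exact h6

lemma demStep_lift {u w : W} (i : B) (h : br cs u w) :
    br cs (u * cs.simple i) (demStep cs w i) := by
  unfold demStep
  by_cases hc : cs.length w < cs.length (w * cs.simple i)
  · rw [if_pos hc]
    exact (liftABC cs (cs.length w)).1 u w i le_rfl h hc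
  · rw [if_neg hc]
    have hne : cs.length (w * cs.simple i) ≠ cs.length w := cs.length_mul_simple_ne w i
    exact (liftABC cs (cs.length w)).2.1 u w i le_rfl h (by omega)

lemma foldl_lift : ∀ (S : List B) (u w : W), br cs u w →
    br cs (u * cs.wordProd S) (S.foldl (demStep cs) w) := by
  intro S
  induction S with
  | nil => intro u w h; simpa using h
  | cons i S ih =>
    intro u w h
    rw [cs.wordProd_cons, List.foldl_cons, ← mul_assoc]
    exact ih (u * cs.simple i) (demStep cs w i) (demStep_lift cs i h)

lemma foldl_demStep_reduced (R : List B) (hred : cs.IsReduced R) :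
    R.foldl (demStep cs) 1 = cs.wordProd R := by
  induction R using List.reverseRecOn with
  | nil => simp
  | append_singleton k c ih =>
    have hkred : cs.IsReduced k := isReduced_of_append_left cs c hred
    rw [List.foldl_append, List.foldl_cons, List.foldl_nil, ih hkred]
    have hπ : cs.wordProd (k ++ [c]) = cs.wordProd k * cs.simple c := by
      rw [cs.wordProd_append, cs.wordProd_singleton]
    have hup : cs.length (cs.wordProd k) < cs.length (cs.wordProd k * cs.simple c) := by
      have h1 : cs.length (cs.wordProd k) = k.length := hkred
      have h2 := hred
      unfold CoxeterSystem.IsReduced at h2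
      rw [hπ, List.length_append, List.length_singleton] at h2
      omega
    unfold demStep
    rw [if_pos hup, hπ]

end DemAux

/-- If `u ≤ v` in Bruhat order, `R` is a reduced word for `v`, and `S` is a reduced word
for `u⁻¹w₀` (where `w₀` is the longest element), then `Dem(R ++ S) = w₀`. -/
theorem demazure_concat_eq_longest (cs : CoxeterSystem M W)
    (w₀ : W) (hw₀ : ∀ x : W, cs.length x ≤ cs.length w₀)
    (u v : W) (huv : BruhatLE cs u v)
    (R S : List B) (hR : IsRWordFor cs R v) (hS : IsRWordFor cs S (u⁻¹ * w₀)) :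
    dem cs (R ++ S) = w₀ := by
  classical
  obtain ⟨hRπ, hRlen⟩ := hR
  obtain ⟨hSπ, hSlen⟩ := hS
  have hRred : cs.IsReduced R := by
    unfold CoxeterSystem.IsReduced
    rw [hRπ, hRlen]
  have h1 : dem cs (R ++ S) = S.foldl (demStep cs) v := by
    unfold dem
    rw [List.foldl_append, DemAux.foldl_demStep_reduced cs R hRred, hRπ]
  have hbr : DemAux.br cs u v := by
    obtain ⟨l, hlv, l', hsub, hl'u⟩ := huv
    have hlred : cs.IsReduced l := by
      unfold CoxeterSystem.IsReduced
      rw [hlv.1, hlv.2]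
    have hl'red : cs.IsReduced l' := by
      unfold CoxeterSystem.IsReduced
      rw [hl'u.1, hl'u.2]
    have h2 := (DemAux.liftABC cs l.length).2.2 l l' le_rfl hlred hl'red hsub
    rwa [hlv.1, hl'u.1] at h2
  have h2 := DemAux.foldl_lift cs S u v hbr
  rw [hSπ, mul_inv_cancel_left] at h2
  have h3 : w₀ = S.foldl (demStep cs) v :=
    DemAux.br_eq_of_length_ge cs h2 (hw₀ _)
  rw [h1, ← h3]
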